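/- Let p be an odd prime and a an integer not divisible by p. For s₁, s₂ ∈ {−1, 1}, the number of x ∈ Z/pZ with x ≢ 0, x + a ≢ 0 (mod p), (x/p) = s₁, and ((x+a)/p) = s₂ equals (1/4)·( p − (p mod 4) − ((a/p) + s₁)·((−a/p) + s₂) ). -/

import Mathlib

section aux
variable (p : ℕ) [Fact p.Prime]

lemma chi_val (x : ZMod p) : legendreSym p (x.val : ℤ) = quadraticChar (ZMod p) x := by
  rw [legendreSym]
  congr 1
  push_cast
  simp [ZMod.natCast_val, ZMod.cast_id]

lemma sum_chi (hp : p ≠ 2) : ∑ x : ZMod p, quadraticChar (ZMod p) x = 0 :=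
  quadraticChar_sum_zero (by rwa [ZMod.ringChar_zmod_n])

lemma sum_chi_shift (hp : p ≠ 2) (b : ZMod p) :
    ∑ x : ZMod p, quadraticChar (ZMod p) (x + b) = 0 := by
  exact (Fintype.sum_bijective (Equiv.addRight b) (Equiv.addRight b).bijective _
    (fun x => quadraticChar (ZMod p) x) (fun x => rfl)).trans (sum_chi p hp)

lemma sum_chi_mul (hp : p ≠ 2) {b : ZMod p} (hb : b ≠ 0) :
    ∑ x : ZMod p, quadraticChar (ZMod p) x * quadraticChar (ZMod p) (x + b) = -1 := by
  classical
  set χ := quadraticChar (ZMod p) with hχ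
  have h0 : ∑ x : ZMod p, χ x * χ (x + b)
      = ∑ x ∈ Finset.univ.filter (· ≠ (0 : ZMod p)), χ x * χ (x + b) := by
    refine (Finset.sum_subset (Finset.subset_univ _) ?_).symm
    intro x _ hx
    simp only [Finset.mem_filter, Finset.mem_univ, true_and, not_not] at hx
    simp [hχ, hx]
  have h1 : ∀ x ∈ Finset.univ.filter (· ≠ (0 : ZMod p)),
      χ x * χ (x + b) = χ (1 + b * x⁻¹) := by
    intro x hx
    simp only [Finset.mem_filter, Finset.mem_univ, true_and] at hx
    rw [← map_mul]
    have : x * (x + b) = x ^ 2 * (1 + b * x⁻¹) := by field_simp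
    rw [this, map_mul, quadraticChar_sq_one' hx, one_mul]
  have h2 : ∑ x ∈ Finset.univ.filter (· ≠ (0 : ZMod p)), χ (1 + b * x⁻¹)
      = ∑ y ∈ Finset.univ.filter (· ≠ (1 : ZMod p)), χ y := by
    refine Finset.sum_nbij' (fun x => 1 + b * x⁻¹) (fun y => b * (y - 1)⁻¹) ?_ ?_ ?_ ?_ ?_
    · intro x hx
      simp only [Finset.mem_filter, Finset.mem_univ, true_and] at hx ⊢
      intro h
      have : b * x⁻¹ = 0 := by linear_combination h
      rcases mul_eq_zero.mp this with h' | h'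
      · exact hb h'
      · exact hx (by simpa using inv_eq_zero.mp h')
    · intro y hy
      simp only [Finset.mem_filter, Finset.mem_univ, true_and] at hy ⊢
      refine mul_ne_zero hb (inv_ne_zero (sub_ne_zero.mpr hy))
    · intro x hx
      simp only [Finset.mem_filter, Finset.mem_univ, true_and] at hx
      field_simp
      simp [hb]
    · intro y hy
      simp only [Finset.mem_filter, Finset.mem_univ, true_and] at hy
      have h1 : y - 1 ≠ 0 := sub_ne_zero.mpr hy
      field_simp
      ring
    · intro x hx; rfl
  have h3 : ∑ y ∈ Finset.univ.filter (· ≠ (1 : ZMod p)), χ y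
      = (∑ y : ZMod p, χ y) - χ 1 := by
    rw [← Finset.sum_filter_add_sum_filter_not Finset.univ (· ≠ (1 : ZMod p)) χ]
    simp [Finset.filter_not, Finset.filter_eq']
  rw [h0, Finset.sum_congr rfl h1, h2, h3, sum_chi p hp]
  simp
end aux

/-- count of x mod p with prescribed Legendre symbols for x and
x + a (Perron's formula). -/
theorem legendre_pair_count (p : ℕ) [Fact p.Prime] (hodd : Odd p) (a : ℤ)
    (ha : ¬ (p : ℤ) ∣ a) (s₁ s₂ : ℤ) (hs₁ : s₁ = 1 ∨ s₁ = -1)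
    (hs₂ : s₂ = 1 ∨ s₂ = -1) :
    (Nat.card {x : ZMod p // x ≠ 0 ∧ x + (a : ZMod p) ≠ 0 ∧
        legendreSym p (x.val : ℤ) = s₁ ∧
        legendreSym p ((x + (a : ZMod p)).val : ℤ) = s₂} : ℤ) * 4 =
      (p : ℤ) - ((p % 4 : ℕ) : ℤ) -
        (legendreSym p a + s₁) * (legendreSym p (-a) + s₂) := by
  classical
  have hp2 : p ≠ 2 := by rintro rfl; rw [Nat.odd_iff] at hodd; norm_num at hodd
  set χ := quadraticChar (ZMod p) with hχ
  set b : ZMod p := (a : ZMod p) with hbdef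
  have hb : b ≠ 0 := by
    rw [hbdef, Ne, ZMod.intCast_zmod_eq_zero_iff_dvd]; exact ha
  have hL : legendreSym p a = χ b := rfl
  have hL' : legendreSym p (-a) = χ (-b) := by
    rw [legendreSym]; push_cast; rfl
  set P := fun x : ZMod p => x ≠ 0 ∧ x + b ≠ 0 ∧ χ x = s₁ ∧ χ (x + b) = s₂ with hP
  have hcard : (Nat.card {x : ZMod p // x ≠ 0 ∧ x + (a : ZMod p) ≠ 0 ∧
        legendreSym p (x.val : ℤ) = s₁ ∧
        legendreSym p ((x + (a : ZMod p)).val : ℤ) = s₂})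
      = (Finset.univ.filter P).card := by
    rw [Nat.card_eq_fintype_card, Fintype.card_subtype]
    congr 1
    ext x
    simp only [hP, chi_val p, ← hbdef]
    rfl
  have key : ((Finset.univ.filter P).card : ℤ) * 4
      = ∑ x : ZMod p, (if P x then (4:ℤ) else 0) := by
    rw [← Finset.sum_filter, Finset.sum_const, nsmul_eq_mul]
  have hpt : ∀ x : ZMod p, (if P x then (4:ℤ) else 0)
      = (1 + s₁ * χ x) * (1 + s₂ * χ (x + b))
        - (if x = 0 then 1 + s₂ * χ b else 0)
        - (if x = -b then 1 + s₁ * χ (-b) else 0) := by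
    intro x
    by_cases hx0 : x = 0
    · have hnb : x ≠ -b := by rw [hx0]; simpa using (neg_ne_zero.mpr hb).symm
      have hnP : ¬ P x := by simp [hP, hx0]
      have hz : χ (0 : ZMod p) = 0 := by simp [hχ]
      rw [if_neg hnP, if_pos hx0, if_neg hnb, hx0, zero_add, hz]
      ring
    · by_cases hxb : x = -b
      · have hx1 : x + b = 0 := by rw [hxb]; ring
        have hnP : ¬ P x := by simp [hP, hx1]
        have hz : χ (0 : ZMod p) = 0 := by simp [hχ]
        rw [if_neg hnP, if_neg hx0, if_pos hxb, hx1, hz, hxb]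
        ring
      · have hx1 : x + b ≠ 0 := fun h => hxb (by linear_combination h)
        have hd1 : χ x = 1 ∨ χ x = -1 := quadraticChar_dichotomy hx0
        have hd2 : χ (x + b) = 1 ∨ χ (x + b) = -1 := quadraticChar_dichotomy hx1
        simp only [if_neg hx0, if_neg hxb, sub_zero]
        rcases hs₁ with rfl | rfl <;> rcases hs₂ with rfl | rfl <;>
          rcases hd1 with h1 | h1 <;> rcases hd2 with h2 | h2 <;>
          simp [hP, hx0, hx1, h1, h2]
  have expand : ∑ x : ZMod p, (1 + s₁ * χ x) * (1 + s₂ * χ (x + b))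
      = (p : ℤ) - s₁ * s₂ := by
    have e : ∀ x : ZMod p, (1 + s₁ * χ x) * (1 + s₂ * χ (x + b))
        = 1 + s₁ * χ x + s₂ * χ (x + b) + (s₁ * s₂) * (χ x * χ (x + b)) := by
      intro x; ring
    rw [Finset.sum_congr rfl (fun x _ => e x), Finset.sum_add_distrib,
      Finset.sum_add_distrib, Finset.sum_add_distrib, ← Finset.mul_sum,
      ← Finset.mul_sum, ← Finset.mul_sum, hχ, sum_chi p hp2,
      sum_chi_shift p hp2 b, sum_chi_mul p hp2 hb]
    simp [Finset.card_univ, ZMod.card]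
    ring
  have e0 : ∑ x : ZMod p, (if x = 0 then (1 + s₂ * χ b : ℤ) else 0)
      = 1 + s₂ * χ b := by
    rw [Finset.sum_ite_eq' Finset.univ (0 : ZMod p) (fun _ => (1 + s₂ * χ b : ℤ))]
    simp
  have e1 : ∑ x : ZMod p, (if x = -b then (1 + s₁ * χ (-b) : ℤ) else 0)
      = 1 + s₁ * χ (-b) := by
    rw [Finset.sum_ite_eq' Finset.univ (-b : ZMod p) (fun _ => (1 + s₁ * χ (-b) : ℤ))]
    simp
  have main : ((Finset.univ.filter P).card : ℤ) * 4
      = (p : ℤ) - s₁ * s₂ - (1 + s₂ * χ b) - (1 + s₁ * χ (-b)) := by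
    rw [key, Finset.sum_congr rfl (fun x _ => hpt x)]
    simp only [Finset.sum_sub_distrib]
    rw [expand, e0, e1]
  have hLL : legendreSym p a * legendreSym p (-a) = ZMod.χ₄ p := by
    rw [show -a = a * -1 from by ring, legendreSym.mul, ← mul_assoc, ← sq,
      legendreSym.sq_one p (by rwa [Ne, ZMod.intCast_zmod_eq_zero_iff_dvd]),
      one_mul, legendreSym.at_neg_one hp2]
  have h4 : ((p % 4 : ℕ) : ℤ) + legendreSym p a * legendreSym p (-a) = 2 := by
    rcases Nat.odd_mod_four_iff.mp (Nat.odd_iff.mp hodd) with h | h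
    · rw [hLL, ZMod.χ₄_nat_one_mod_four h, h]; norm_num
    · rw [hLL, ZMod.χ₄_nat_three_mod_four h, h]; norm_num
  rw [hL, hL'] at h4
  rw [hcard, main, hL, hL']
  linear_combination h4
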